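/- arXiv:2201.13256 — 5 statements merged into one kernel-verified Lean document; each statement's English description precedes it below -/
import Mathlib

section
/- Let g : ℝⁿ → ℝ be C² with ∇g L-Lipschitz, L < 1, and let D = Id − ∇g. Define φ on Im(D) by φ(D(u)) = g(u) − ½‖∇g(u)‖². Then for every y ∈ ℝⁿ, the function x ↦ φ(x) + ½‖y−x‖² restricted to Im(D) attains its unique global minimum at x = D(y); i.e., D(y) = Prox_φ(y). -/
open Real InnerProductSpace

local notation "⟪" x ", " y "⟫" => @inner ℝ _ _ x y

-- derivative along a line
lemma line_hasDerivAt {n : ℕ} {g : EuclideanSpace ℝ (Fin n) → ℝ}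
    (hg : ContDiff ℝ 2 g) (u v : EuclideanSpace ℝ (Fin n)) (t : ℝ) :
    HasDerivAt (fun s : ℝ => g (u + s • v)) ⟪gradient g (u + t • v), v⟫ t := by
  have hdiff : DifferentiableAt ℝ g (u + t • v) :=
    (hg.differentiable (by norm_num)).differentiableAt
  have hgrad := hdiff.hasGradientAt
  have hF : HasFDerivAt g (InnerProductSpace.toDual ℝ _ (gradient g (u + t • v))) (u + t • v) :=
    hasGradientAt_iff_hasFDerivAt.mp hgrad
  have hline : HasDerivAt (fun s : ℝ => u + s • v) v t := by
    simpa using ((hasDerivAt_id t).smul_const v).const_add u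
  simpa [Function.comp_def] using hF.comp_hasDerivAt t hline

-- descent lemma
lemma descent {n : ℕ} {g : EuclideanSpace ℝ (Fin n) → ℝ} {L : ℝ}
    (hg : ContDiff ℝ 2 g)
    (hlip : ∀ x y, ‖gradient g x - gradient g y‖ ≤ L * ‖x - y‖)
    (u y : EuclideanSpace ℝ (Fin n)) :
    g y ≤ g u + ⟪gradient g u, y - u⟫ + L / 2 * ‖y - u‖ ^ 2 := by
  set v := y - u with hv
  set k : ℝ → ℝ := fun t => g (u + t • v) - t * ⟪gradient g u, v⟫ - t ^ 2 * (L / 2) * ‖v‖ ^ 2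
    with hk
  have hderiv : ∀ t : ℝ, HasDerivAt k
      (⟪gradient g (u + t • v), v⟫ - ⟪gradient g u, v⟫ - 2 * t * (L / 2) * ‖v‖ ^ 2) t := by
    intro t
    have h1 := line_hasDerivAt hg u v t
    have h2 : HasDerivAt (fun t : ℝ => t * ⟪gradient g u, v⟫) ⟪gradient g u, v⟫ t := by
      simpa using (hasDerivAt_id t).mul_const _
    have h3 : HasDerivAt (fun t : ℝ => t ^ 2 * (L / 2) * ‖v‖ ^ 2)
        (2 * t * (L / 2) * ‖v‖ ^ 2) t := by
      have := ((hasDerivAt_pow 2 t).mul_const (L / 2)).mul_const (‖v‖ ^ 2)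
      simpa [mul_comm, mul_assoc, mul_left_comm] using this
    exact (h1.sub h2).sub h3
  have hmono : AntitoneOn k (Set.Icc 0 1) := by
    apply antitoneOn_of_deriv_nonpos (convex_Icc 0 1)
    · exact fun t _ => ((hderiv t).continuousAt).continuousWithinAt
    · exact fun t _ => ((hderiv t).differentiableAt).differentiableWithinAt
    · intro t ht
      rw [interior_Icc] at ht
      rw [(hderiv t).deriv]
      have hbound : ⟪gradient g (u + t • v) - gradient g u, v⟫ ≤ L * t * ‖v‖ ^ 2 := by
        calc ⟪gradient g (u + t • v) - gradient g u, v⟫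
            ≤ ‖gradient g (u + t • v) - gradient g u‖ * ‖v‖ := real_inner_le_norm _ _
          _ ≤ L * ‖(u + t • v) - u‖ * ‖v‖ :=
              mul_le_mul_of_nonneg_right (hlip _ _) (norm_nonneg v)
          _ = L * t * ‖v‖ ^ 2 := by
              rw [add_sub_cancel_left, norm_smul]
              simp [abs_of_pos ht.1]; ring
      have : ⟪gradient g (u + t • v), v⟫ - ⟪gradient g u, v⟫ =
          ⟪gradient g (u + t • v) - gradient g u, v⟫ := by
        rw [inner_sub_left]
      rw [this]
      nlinarith [hbound]
  have h01 := hmono (Set.left_mem_Icc.mpr zero_le_one) (Set.right_mem_Icc.mpr zero_le_one)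
    zero_le_one
  simp only [hk] at h01
  have he : u + (1:ℝ) • v = y := by rw [hv]; simp
  rw [he] at h01
  simp only [one_mul, one_pow, zero_smul, add_zero, zero_mul, sub_zero] at h01
  rw [show ((0:ℝ)^2) = 0 from by norm_num] at h01
  simp only [zero_mul, sub_zero] at h01
  linarith


/-- With `D = Id − ∇g`, `∇g` `L`-Lipschitz with `L < 1`, and `φ` defined on `Im D` by
`φ(D u) = g(u) − ½‖∇g u‖²`, the function `x ↦ φ(x) + ½‖y − x‖²` restricted to `Im D`
attains its unique global minimum at `x = D y`. -/
theorem stmt_3 {n : ℕ} (g : EuclideanSpace ℝ (Fin n) → ℝ) (L : ℝ)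
    (hg : ContDiff ℝ 2 g) (hL : L < 1)
    (hlip : ∀ x y, ‖gradient g x - gradient g y‖ ≤ L * ‖x - y‖)
    (D : EuclideanSpace ℝ (Fin n) → EuclideanSpace ℝ (Fin n))
    (hD : ∀ x, D x = x - gradient g x)
    (φ : EuclideanSpace ℝ (Fin n) → ℝ)
    (hφ : ∀ u, φ (D u) = g u - ‖gradient g u‖ ^ 2 / 2) :
    ∀ y : EuclideanSpace ℝ (Fin n),
      (∀ x ∈ Set.range D, φ (D y) + ‖y - D y‖ ^ 2 / 2 ≤ φ x + ‖y - x‖ ^ 2 / 2) ∧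
      (∀ x ∈ Set.range D,
        φ x + ‖y - x‖ ^ 2 / 2 = φ (D y) + ‖y - D y‖ ^ 2 / 2 → x = D y) := by
  intro y
  -- value at D y is g y
  have hvy : φ (D y) + ‖y - D y‖ ^ 2 / 2 = g y := by
    rw [hφ y, hD y]
    have : y - (y - gradient g y) = gradient g y := by abel
    rw [this]; ring
  -- value formula and key inequality
  have key : ∀ u : EuclideanSpace ℝ (Fin n),
      g y + (1 - L) / 2 * ‖y - u‖ ^ 2 ≤ φ (D u) + ‖y - D u‖ ^ 2 / 2 := by
    intro u
    have hval : φ (D u) + ‖y - D u‖ ^ 2 / 2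
        = g u + ⟪gradient g u, y - u⟫ + ‖y - u‖ ^ 2 / 2 := by
      rw [hφ u, hD u]
      have h1 : y - (u - gradient g u) = (y - u) + gradient g u := by abel
      rw [h1, norm_add_sq_real]
      rw [real_inner_comm]
      ring
    have hdes := descent hg hlip u y
    rw [hval]
    nlinarith [hdes]
  constructor
  · rintro x ⟨u, rfl⟩
    have := key u
    nlinarith [sq_nonneg ‖y - u‖, this, hvy]
  · rintro x ⟨u, rfl⟩ heq
    have hk := key u
    rw [heq, hvy] at hk
    have h2 : (1 - L) / 2 * ‖y - u‖ ^ 2 ≤ 0 := by linarith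
    have h3 : ‖y - u‖ ^ 2 ≤ 0 := by
      by_contra h
      push_neg at h
      nlinarith
    have h4 : y - u = 0 := by
      have := sq_nonneg ‖y - u‖
      have : ‖y - u‖ = 0 := by nlinarith
      exact norm_eq_zero.mp this
    have : u = y := by
      have := sub_eq_zero.mp h4
      exact this.symm
    rw [this]
end

section
/- With g C² with ∇g L-Lipschitz (L<1), D = Id − ∇g, and φ defined by φ(D(u)) = g(u) − ½‖∇g(u)‖² on Im(D), +∞ elsewhere: for all x ∈ ℝⁿ, φ(x) ≥ g(x), with equality whenever x is a fixed point of D (i.e., ∇g(x) = 0). -/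
open intervalIntegral in
lemma descent_aux {n : ℕ} (g : EuclideanSpace ℝ (Fin n) → ℝ) (L : ℝ)
    (hg : ContDiff ℝ 2 g)
    (hlip : ∀ x y, ‖gradient g x - gradient g y‖ ≤ L * ‖x - y‖)
    (u v : EuclideanSpace ℝ (Fin n)) :
    g (u + v) ≤ g u + inner ℝ (gradient g u) v + L / 2 * ‖v‖ ^ 2 := by
  have hdiff : Differentiable ℝ g := hg.differentiable two_ne_zero
  -- derivative of t ↦ g (u + t • v)
  have hderiv : ∀ t : ℝ, HasDerivAt (fun t : ℝ => g (u + t • v))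
      (inner ℝ (gradient g (u + t • v)) v : ℝ) t := by
    intro t
    have h1 : HasGradientAt g (gradient g (u + t • v)) (u + t • v) :=
      (hdiff (u + t • v)).hasGradientAt
    have h2 : HasDerivAt (fun t : ℝ => u + t • v) v t := by
      simpa using ((hasDerivAt_id t).smul_const v).const_add u
    have := h1.hasFDerivAt.comp_hasDerivAt t h2
    rw [InnerProductSpace.toDual_apply_apply] at this
    exact this
  have hcont : Continuous fun t : ℝ => (inner ℝ (gradient g (u + t • v)) v : ℝ) := by
    have hgr : Continuous (gradient g) := by
      have : Continuous (fderiv ℝ g) := (hg.fderiv_right (m := 1) le_rfl).continuous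
      exact (InnerProductSpace.toDual ℝ _).symm.continuous.comp this
    exact (hgr.comp (by continuity)).inner continuous_const
  have hint : g (u + v) - g u = ∫ t in (0:ℝ)..1,
      (inner ℝ (gradient g (u + t • v)) v : ℝ) := by
    have := intervalIntegral.integral_eq_sub_of_hasDerivAt
      (f := fun t : ℝ => g (u + t • v)) (a := 0) (b := 1)
      (fun t _ => hderiv t) (hcont.intervalIntegrable 0 1)
    simp only [one_smul, zero_smul, add_zero] at this
    linarith [this]
  have hbound : ∀ t ∈ Set.Icc (0:ℝ) 1,
      (inner ℝ (gradient g (u + t • v)) v : ℝ)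
        ≤ inner ℝ (gradient g u) v + L * t * ‖v‖ ^ 2 := by
    intro t ht
    have h1 : (inner ℝ (gradient g (u + t • v)) v : ℝ)
        = inner ℝ (gradient g u) v + inner ℝ (gradient g (u + t • v) - gradient g u) v := by
      rw [inner_sub_left]; ring
    rw [h1]
    have h2 : (inner ℝ (gradient g (u + t • v) - gradient g u) v : ℝ)
        ≤ ‖gradient g (u + t • v) - gradient g u‖ * ‖v‖ := real_inner_le_norm _ _
    have h3 : ‖gradient g (u + t • v) - gradient g u‖ ≤ L * (t * ‖v‖) := by
      have := hlip (u + t • v) u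
      simpa [norm_smul, abs_of_nonneg ht.1] using this
    nlinarith [norm_nonneg v, norm_nonneg (gradient g (u + t • v) - gradient g u)]
  have hIineq : (∫ t in (0:ℝ)..1, (inner ℝ (gradient g (u + t • v)) v : ℝ))
      ≤ ∫ t in (0:ℝ)..1, (inner ℝ (gradient g u) v + L * t * ‖v‖ ^ 2 : ℝ) := by
    apply intervalIntegral.integral_mono_on (by norm_num)
      (hcont.intervalIntegrable 0 1)
      (((continuous_const.add ((continuous_const.mul continuous_id').mul
        continuous_const)) : Continuous fun t : ℝ =>
        (inner ℝ (gradient g u) v + L * t * ‖v‖ ^ 2 : ℝ)).intervalIntegrable 0 1)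
    exact hbound
  have hIval : (∫ t in (0:ℝ)..1, (inner ℝ (gradient g u) v + L * t * ‖v‖ ^ 2 : ℝ))
      = inner ℝ (gradient g u) v + L / 2 * ‖v‖ ^ 2 := by
    rw [intervalIntegral.integral_add (g := fun t : ℝ => (L * t * ‖v‖ ^ 2 : ℝ)) (intervalIntegrable_const)
      ((((continuous_const.mul continuous_id').mul continuous_const) :
        Continuous fun t : ℝ => (L * t * ‖v‖ ^ 2 : ℝ)).intervalIntegrable 0 1)]
    have : (∫ t in (0:ℝ)..1, (L * t * ‖v‖ ^ 2 : ℝ))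
        = L * ‖v‖ ^ 2 * ∫ t in (0:ℝ)..1, t := by
      rw [← intervalIntegral.integral_const_mul]
      congr 1; ext t; ring
    rw [this]
    simp [integral_id]
    ring
  linarith [hint ▸ hIineq.trans_eq hIval]

/-- With `D = Id − ∇g`, `∇g` `L`-Lipschitz with `L < 1`, and `φ(D u) = g(u) − ½‖∇g u‖²`
on `Im D`, `+∞` elsewhere: `φ(x) ≥ g(x)` for all `x`, with equality whenever
`x` is a fixed point of `D` (i.e. `∇g x = 0`). -/
theorem stmt_4 {n : ℕ} (g : EuclideanSpace ℝ (Fin n) → ℝ) (L : ℝ)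
    (hg : ContDiff ℝ 2 g) (hL : L < 1)
    (hlip : ∀ x y, ‖gradient g x - gradient g y‖ ≤ L * ‖x - y‖)
    (D : EuclideanSpace ℝ (Fin n) → EuclideanSpace ℝ (Fin n))
    (hD : ∀ x, D x = x - gradient g x)
    (φ : EuclideanSpace ℝ (Fin n) → EReal)
    (hφ : ∀ u, φ (D u) = ((g u - ‖gradient g u‖ ^ 2 / 2 : ℝ) : EReal))
    (hφtop : ∀ x, x ∉ Set.range D → φ x = ⊤) :
    ∀ x : EuclideanSpace ℝ (Fin n),
      ((g x : ℝ) : EReal) ≤ φ x ∧ (gradient g x = 0 → φ x = ((g x : ℝ) : EReal)) := by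
  intro x
  constructor
  · by_cases hx : x ∈ Set.range D
    · obtain ⟨u, hu⟩ := hx
      rw [← hu, hφ u]
      have hkey := descent_aux g L hg hlip u (-(gradient g u))
      have hx' : u + -(gradient g u) = D u := by rw [hD]; abel
      rw [hx'] at hkey
      have : g (D u) ≤ g u - ‖gradient g u‖ ^ 2 / 2 := by
        have h1 : (inner ℝ (gradient g u) (-(gradient g u)) : ℝ)
            = -‖gradient g u‖ ^ 2 := by
          rw [inner_neg_right, real_inner_self_eq_norm_sq]
        rw [h1] at hkey
        have h2 : ‖-(gradient g u)‖ = ‖gradient g u‖ := norm_neg _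
        rw [h2] at hkey
        nlinarith [sq_nonneg ‖gradient g u‖]
      exact EReal.coe_le_coe_iff.mpr this
    · rw [hφtop x hx]; exact le_top
  · intro hgrad
    have hfix : D x = x := by rw [hD, hgrad]; simp
    have := hφ x
    rw [hfix, hgrad] at this
    simpa using this
end

section
/- With g C² with ∇g L-Lipschitz (L<1), D = Id − ∇g, and φ defined on Im(D) by φ(D(u)) = g(u) − ½‖∇g(u)‖²: the gradient of φ at x ∈ Im(D) equals D⁻¹(x) − x = ∇g(D⁻¹(x)). -/
open InnerProductSpace

/-- With `D = Id − ∇g`, `∇g` `L`-Lipschitz with `L < 1`, and `φ` defined on `Im D` by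
`φ(D u) = g(u) − ½‖∇g u‖²`: the gradient of `φ` at `x = D u ∈ Im D` equals
`D⁻¹(x) − x = u − D u = ∇g(u)`. -/
theorem stmt_5 {n : ℕ} (g : EuclideanSpace ℝ (Fin n) → ℝ) (L : ℝ)
    (hg : ContDiff ℝ 2 g) (hL : L < 1)
    (hlip : ∀ x y, ‖gradient g x - gradient g y‖ ≤ L * ‖x - y‖)
    (D : EuclideanSpace ℝ (Fin n) → EuclideanSpace ℝ (Fin n))
    (hD : ∀ x, D x = x - gradient g x)
    (φ : EuclideanSpace ℝ (Fin n) → ℝ)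
    (hφ : ∀ u, φ (D u) = g u - ‖gradient g u‖ ^ 2 / 2) :
    ∀ u : EuclideanSpace ℝ (Fin n),
      gradient φ (D u) = u - D u ∧ u - D u = gradient g u := by
  intro u
  have h2 : u - D u = gradient g u := by rw [hD u]; exact sub_sub_cancel u (gradient g u)
  refine ⟨?_, h2⟩
  rw [h2]
  set a := gradient g u with ha
  -- gradient of g is C¹
  have hgd : ContDiff ℝ 1 (gradient g) := by
    have hrw : gradient g = fun x => (toDual ℝ (EuclideanSpace ℝ (Fin n))).symm (fderiv ℝ g x) := rfl
    rw [hrw]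
    exact (toDual ℝ (EuclideanSpace ℝ (Fin n))).symm.contDiff.comp (hg.fderiv_right (by norm_num))
  set H := fderiv ℝ (gradient g) u with hHdef
  have hHs : HasStrictFDerivAt (gradient g) H u :=
    hgd.contDiffAt.hasStrictFDerivAt one_ne_zero
  -- Lipschitz bound on the Hessian
  have hlipW : LipschitzWith (Real.toNNReal L) (gradient g) := by
    apply LipschitzWith.of_dist_le_mul
    intro x y
    rw [dist_eq_norm, dist_eq_norm]
    calc ‖gradient g x - gradient g y‖ ≤ L * ‖x - y‖ := hlip x y
      _ ≤ Real.toNNReal L * ‖x - y‖ :=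
        mul_le_mul_of_nonneg_right (Real.le_coe_toNNReal L) (norm_nonneg _)
  have hHnorm : ‖H‖ < 1 := by
    refine lt_of_le_of_lt (hHs.hasFDerivAt.le_of_lipschitz hlipW) ?_
    rw [Real.coe_toNNReal']
    exact max_lt hL one_pos
  -- the invertible linear map `1 - H`
  set E : EuclideanSpace ℝ (Fin n) ≃L[ℝ] EuclideanSpace ℝ (Fin n) := ContinuousLinearEquiv.ofUnit (Units.oneSub H hHnorm) with hE
  have hEapp : ∀ v, E v = v - H v := by
    intro v
    show ((Units.oneSub H hHnorm).val : EuclideanSpace ℝ (Fin n) →L[ℝ] EuclideanSpace ℝ (Fin n)) v = v - H v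
    rw [Units.val_oneSub]
    simp [ContinuousLinearMap.sub_apply]
  -- strict derivative of D
  have hDs : HasStrictFDerivAt D ((E : EuclideanSpace ℝ (Fin n) →L[ℝ] EuclideanSpace ℝ (Fin n))) u := by
    have h1 : HasStrictFDerivAt (fun x : EuclideanSpace ℝ (Fin n) => x - gradient g x)
        (ContinuousLinearMap.id ℝ (EuclideanSpace ℝ (Fin n)) - H) u := (hasStrictFDerivAt_id u).sub hHs
    have hEeq : (E : EuclideanSpace ℝ (Fin n) →L[ℝ] EuclideanSpace ℝ (Fin n)) = ContinuousLinearMap.id ℝ (EuclideanSpace ℝ (Fin n)) - H := by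
      ext v
      simp [hEapp v, ContinuousLinearMap.sub_apply]
    rw [hEeq, show D = fun x : EuclideanSpace ℝ (Fin n) => x - gradient g x from funext hD]
    exact h1
  set Dinv : EuclideanSpace ℝ (Fin n) → EuclideanSpace ℝ (Fin n) := hDs.localInverse D _ u with hDinvdef
  have hu : Dinv (D u) = u := hDs.localInverse_apply_image
  have hinv : HasFDerivAt Dinv ((E.symm : EuclideanSpace ℝ (Fin n) →L[ℝ] EuclideanSpace ℝ (Fin n))) (D u) :=
    hDs.to_localInverse.hasFDerivAt
  -- derivative of g via the gradient
  have hgder : HasFDerivAt g (toDual ℝ (EuclideanSpace ℝ (Fin n)) a) u := by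
    have hdiff : DifferentiableAt ℝ g u := (hg.differentiable two_ne_zero).differentiableAt
    exact hasGradientAt_iff_hasFDerivAt.mp hdiff.hasGradientAt
  -- derivative of ψ = g - ‖∇g‖²/2
  have hψ : HasFDerivAt (fun v => g v - ‖gradient g v‖ ^ 2 / 2)
      ((toDual ℝ (EuclideanSpace ℝ (Fin n)) a).comp (E : EuclideanSpace ℝ (Fin n) →L[ℝ] EuclideanSpace ℝ (Fin n))) u := by
    have hn : HasFDerivAt (fun v => ‖gradient g v‖ ^ 2) (2 • (innerSL ℝ a).comp H) u :=
      hHs.hasFDerivAt.norm_sq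
    have hn2 : HasFDerivAt (fun v => ‖gradient g v‖ ^ 2 / 2)
        ((2:ℝ)⁻¹ • (2 • (innerSL ℝ a).comp H)) u := by
      simpa [div_eq_inv_mul, mul_comm, Pi.smul_def, smul_eq_mul] using hn.const_smul (2:ℝ)⁻¹
    have hd := hgder.sub hn2
    refine hd.congr_fderiv ?_
    ext v
    have : (inner ℝ a (H v) : ℝ) = inner ℝ a v - inner ℝ a (v - H v) := by
      rw [inner_sub_right]; ring
    simp [ContinuousLinearMap.comp_apply, ContinuousLinearMap.sub_apply,
      ContinuousLinearMap.smul_apply, toDual_apply_apply, hEapp v, inner_sub_right,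
      two_smul]
    ring
  -- derivative of φ at D u
  have hψ' : HasFDerivAt (fun v => g v - ‖gradient g v‖ ^ 2 / 2)
      ((toDual ℝ (EuclideanSpace ℝ (Fin n)) a).comp (E : EuclideanSpace ℝ (Fin n) →L[ℝ] EuclideanSpace ℝ (Fin n))) (Dinv (D u)) := by rw [hu]; exact hψ
  have hkey : φ =ᶠ[nhds (D u)]
      fun y => (fun v => g v - ‖gradient g v‖ ^ 2 / 2) (Dinv y) := by
    filter_upwards [hDs.eventually_right_inverse] with y hy
    calc φ y = φ (D (Dinv y)) := by rw [hy]
      _ = _ := hφ _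
  have hφder : HasFDerivAt φ
      (((toDual ℝ (EuclideanSpace ℝ (Fin n)) a).comp (E : EuclideanSpace ℝ (Fin n) →L[ℝ] EuclideanSpace ℝ (Fin n))).comp (E.symm : EuclideanSpace ℝ (Fin n) →L[ℝ] EuclideanSpace ℝ (Fin n))) (D u) :=
    (hψ'.comp (D u) hinv).congr_of_eventuallyEq hkey
  have hsimp : (((toDual ℝ (EuclideanSpace ℝ (Fin n)) a).comp (E : EuclideanSpace ℝ (Fin n) →L[ℝ] EuclideanSpace ℝ (Fin n))).comp (E.symm : EuclideanSpace ℝ (Fin n) →L[ℝ] EuclideanSpace ℝ (Fin n)))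
      = toDual ℝ (EuclideanSpace ℝ (Fin n)) a := by
    ext v
    simp [ContinuousLinearMap.comp_apply]
  rw [hsimp] at hφder
  exact (hasGradientAt_iff_hasFDerivAt.mpr hφder).gradient
end

section
/- Sufficient decrease for proximal gradient with nonconvex regularizer: let f be differentiable with L_f-Lipschitz gradient, λL_f < 1, φ proper, and suppose x⁺ minimizes z ↦ φ(z) + ½‖z − (x − λ∇f(x))‖². Then F(x⁺) ≤ F(x) − ½(1−λL_f)‖x⁺−x‖², where F = λf + φ. -/
open scoped RealInnerProductSpace

lemma descent_lemma {E : Type*} [NormedAddCommGroup E] [InnerProductSpace ℝ E] [CompleteSpace E]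
    (f : E → ℝ) (L : ℝ) (hf : Differentiable ℝ f)
    (hlip : ∀ x y, ‖gradient f x - gradient f y‖ ≤ L * ‖x - y‖)
    (x d : E) :
    f (x + d) ≤ f x + ⟪gradient f x, d⟫ + L / 2 * ‖d‖ ^ 2 := by
  set h : ℝ → ℝ := fun t =>
    f x + t * ⟪gradient f x, d⟫ + L / 2 * ‖d‖ ^ 2 * t ^ 2 - f (x + t • d) with hh
  have hline : ∀ t : ℝ, HasDerivAt (fun s : ℝ => x + s • d) d t := fun t => by
    simpa using ((hasDerivAt_id t).smul_const d).const_add x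
  have hcomp : ∀ t : ℝ, HasDerivAt (fun s : ℝ => f (x + s • d))
      (⟪gradient f (x + t • d), d⟫) t := by
    intro t
    have := ((hf (x + t • d)).hasGradientAt.hasFDerivAt).comp_hasDerivAt t (hline t)
    simpa [InnerProductSpace.toDual_apply_apply, Function.comp_def] using this
  have hderiv : ∀ t : ℝ, HasDerivAt h
      (⟪gradient f x, d⟫ + L / 2 * ‖d‖ ^ 2 * (2 * t) - ⟪gradient f (x + t • d), d⟫) t := by
    intro t
    have h1 : HasDerivAt (fun t : ℝ => f x + t * ⟪gradient f x, d⟫ + L / 2 * ‖d‖ ^ 2 * t ^ 2)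
        (⟪gradient f x, d⟫ + L / 2 * ‖d‖ ^ 2 * (2 * t)) t := by
      have := (((hasDerivAt_id t).mul_const ⟪gradient f x, d⟫).const_add (f x)).add
        (((hasDerivAt_pow 2 t)).const_mul (L / 2 * ‖d‖ ^ 2))
      simpa [pow_one, mul_comm, mul_assoc, mul_left_comm, Pi.add_def] using this
    simpa [Pi.sub_def, hh] using h1.sub (hcomp t)
  have hmono : MonotoneOn h (Set.Icc (0 : ℝ) 1) := by
    apply monotoneOn_of_deriv_nonneg (convex_Icc 0 1)
    · exact (Continuous.continuousOn (by
        have : Continuous h := by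
          have : Differentiable ℝ h := fun t => (hderiv t).differentiableAt
          exact this.continuous
        exact this))
    · intro t ht
      exact (hderiv t).differentiableAt.differentiableWithinAt
    · intro t ht
      rw [interior_Icc] at ht
      rw [(hderiv t).deriv]
      have hbound : ⟪gradient f (x + t • d), d⟫ - ⟪gradient f x, d⟫ ≤ L * t * ‖d‖ ^ 2 := by
        have h1 : ⟪gradient f (x + t • d) - gradient f x, d⟫
            ≤ ‖gradient f (x + t • d) - gradient f x‖ * ‖d‖ := real_inner_le_norm _ _
        have h2 : ‖gradient f (x + t • d) - gradient f x‖ ≤ L * ‖t • d‖ := by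
          simpa using hlip (x + t • d) x
        have h3 : ‖t • d‖ = t * ‖d‖ := by
          rw [norm_smul, Real.norm_eq_abs, abs_of_pos ht.1]
        rw [inner_sub_left] at h1
        have h4 := mul_le_mul_of_nonneg_right h2 (norm_nonneg d)
        rw [h3] at h4
        nlinarith [norm_nonneg d]
      nlinarith
  have h01 : h 0 ≤ h 1 := hmono (by norm_num) (by norm_num) (by norm_num)
  simp only [hh] at h01
  norm_num at h01
  have hgd : ⟪gradient f x, d⟫ = (fderiv ℝ f x) d := by simp
  linarith

/-- Sufficient decrease for the proximal gradient step with a nonconvex regularizer: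
if `x⁺` minimizes `z ↦ φ(z) + ½‖z − (x − λ∇f(x))‖²` and `λ L_f < 1`, then
`F(x⁺) + ((1−λL_f)/2)‖x⁺−x‖² ≤ F(x)` where `F = λf + φ`. -/
theorem stmt_9 {n : ℕ} (f : EuclideanSpace ℝ (Fin n) → ℝ) (Lf lam : ℝ)
    (hf : Differentiable ℝ f)
    (hlip : ∀ x y, ‖gradient f x - gradient f y‖ ≤ Lf * ‖x - y‖)
    (hlam : 0 < lam) (hstep : lam * Lf < 1)
    (φ : EuclideanSpace ℝ (Fin n) → EReal) (hproper : ∃ x, φ x ≠ ⊤)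
    (F : EuclideanSpace ℝ (Fin n) → EReal)
    (hF : ∀ x, F x = ((lam * f x : ℝ) : EReal) + φ x)
    (x xp : EuclideanSpace ℝ (Fin n))
    (hmin : ∀ z, φ xp + ((‖xp - (x - lam • gradient f x)‖ ^ 2 / 2 : ℝ) : EReal)
      ≤ φ z + ((‖z - (x - lam • gradient f x)‖ ^ 2 / 2 : ℝ) : EReal)) :
    F xp + (((1 - lam * Lf) / 2 * ‖xp - x‖ ^ 2 : ℝ) : EReal) ≤ F x := by
  set g := gradient f x with hg
  set d := xp - x with hd
  have key := hmin x
  -- simplify the norms in key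
  have e1 : xp - (x - lam • g) = d + lam • g := by rw [hd]; abel
  have e2 : x - (x - lam • g) = lam • g := by abel
  rw [e1, e2] at key
  -- descent lemma
  have hdesc : f xp ≤ f x + ⟪g, d⟫ + Lf / 2 * ‖d‖ ^ 2 := by
    have := descent_lemma f Lf hf hlip x d
    rwa [show x + d = xp by rw [hd]; abel] at this
  rw [hF x, hF xp]
  -- case analysis on φ x and φ xp
  have tri : ∀ a : EReal, a = ⊥ ∨ a = ⊤ ∨ ∃ q : ℝ, a = q := by
    intro a
    induction a using EReal.rec with
    | bot => exact Or.inl rfl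
    | top => exact Or.inr (Or.inl rfl)
    | coe q => exact Or.inr (Or.inr ⟨q, rfl⟩)
  rcases tri (φ x) with hφx | hφx | ⟨q, hφx⟩
  · -- φ x = ⊥ : then key forces φ xp + stuff ≤ ⊥
    rw [hφx, EReal.bot_add] at key
    have := le_bot_iff.mp key
    rcases tri (φ xp) with hφxp | hφxp | ⟨p, hφxp⟩
    · rw [hφxp, EReal.add_bot, EReal.bot_add]; exact bot_le
    · rw [hφxp, EReal.top_add_coe] at this; exact absurd this (by simp)
    · rw [hφxp, ← EReal.coe_add] at this; exact absurd this (EReal.coe_ne_bot _)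
  · -- φ x = ⊤
    rw [hφx, EReal.coe_add_top]; exact le_top
  · -- φ x = q real
    rcases tri (φ xp) with hφxp | hφxp | ⟨p, hφxp⟩
    · rw [hφxp, EReal.add_bot, EReal.bot_add]; exact bot_le
    · -- φ xp = ⊤ impossible
      rw [hφxp, hφx, EReal.top_add_coe, ← EReal.coe_add] at key
      exact absurd (top_le_iff.mp key) (EReal.coe_ne_top _)
    · -- both real
      rw [hφxp, hφx, ← EReal.coe_add, ← EReal.coe_add] at key
      rw [hφxp, hφx, ← EReal.coe_add, ← EReal.coe_add, ← EReal.coe_add, EReal.coe_le_coe_iff]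
      have keyr : p + ‖d + lam • g‖ ^ 2 / 2 ≤ q + ‖lam • g‖ ^ 2 / 2 :=
        EReal.coe_le_coe_iff.mp key
      have hexp : ‖d + lam • g‖ ^ 2 = ‖d‖ ^ 2 + 2 * (lam * ⟪g, d⟫) + ‖lam • g‖ ^ 2 := by
        rw [norm_add_sq_real, real_inner_smul_right, real_inner_comm]
      rw [hexp] at keyr
      nlinarith [mul_le_mul_of_nonneg_left hdesc hlam.le]
end

section
/- Stationarity of DRS cluster points: suppose sequences (y_k), (z_k), (x_k) satisfy 0 = ∇φ(y_{k+1}) + (y_{k+1} − x_k) and 0 ∈ λ∂f(z_{k+1}) + (z_{k+1} − 2y_{k+1} + x_k) for all k, with ‖y_k − z_k‖ → 0, φ C¹ with continuous gradient, f proper lsc, and (y_{k_j}, z_{k_j}, x_{k_j}) → (y*, z*, x*) with f(z_{k_j}) → f(z*). Then y* = z* and −∇φ(y*) ∈ λ∂f(y*), i.e., y* is a stationary point of λf + φ. -/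
open Filter

/-- Stationarity of DRS cluster points: from the optimality conditions
`0 = ∇φ(y_{k+1}) + (y_{k+1} − x_k)` and `0 ∈ λ∂f(z_{k+1}) + (z_{k+1} − 2y_{k+1} + x_k)`,
vanishing residual `‖y_k − z_k‖ → 0`, and a convergent subsequence along which
`f(z_{k_j}) → f(z*)`, one gets `y* = z*` and `−∇φ(y*) ∈ λ∂f(y*)`. -/
theorem stmt_18 {n : ℕ} (f : EuclideanSpace ℝ (Fin n) → EReal)
    (hproper : ∃ x, f x ≠ ⊤) (hbot : ∀ x, f x ≠ ⊥) (hlsc : LowerSemicontinuous f)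
    (subf : EuclideanSpace ℝ (Fin n) → Set (EuclideanSpace ℝ (Fin n)))
    (hclosed : ∀ (x v : EuclideanSpace ℝ (Fin n)) (xk vk : ℕ → EuclideanSpace ℝ (Fin n)),
      Tendsto xk atTop (nhds x) → Tendsto (fun k => f (xk k)) atTop (nhds (f x)) →
      Tendsto vk atTop (nhds v) → (∀ k, vk k ∈ subf (xk k)) → v ∈ subf x)
    (φ : EuclideanSpace ℝ (Fin n) → ℝ) (hφ : ContDiff ℝ 1 φ)
    (lam : ℝ) (hlam : 0 < lam)
    (y z x : ℕ → EuclideanSpace ℝ (Fin n))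
    (hy : ∀ k, gradient φ (y (k + 1)) + (y (k + 1) - x k) = 0)
    (hz : ∀ k, ∃ v ∈ subf (z (k + 1)),
      lam • v + (z (k + 1) - (2 : ℝ) • y (k + 1) + x k) = 0)
    (hres : Tendsto (fun k => ‖y k - z k‖) atTop (nhds 0))
    (ys zs xs : EuclideanSpace ℝ (Fin n)) (j : ℕ → ℕ) (hj : StrictMono j)
    (hyc : Tendsto (fun i => y (j i)) atTop (nhds ys))
    (hzc : Tendsto (fun i => z (j i)) atTop (nhds zs))
    (hxc : Tendsto (fun i => x (j i)) atTop (nhds xs))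
    (hfc : Tendsto (fun i => f (z (j i))) atTop (nhds (f zs))) :
    ys = zs ∧ ∃ v ∈ subf ys, lam • v = -gradient φ ys := by
  -- y* = z*
  have hsub : Tendsto (fun i => ‖y (j i) - z (j i)‖) atTop (nhds 0) :=
    hres.comp hj.tendsto_atTop
  have hsub2 : Tendsto (fun i => ‖y (j i) - z (j i)‖) atTop (nhds ‖ys - zs‖) :=
    (hyc.sub hzc).norm
  have heq : ys = zs := by
    have := tendsto_nhds_unique hsub2 hsub
    rwa [norm_sub_eq_zero_iff] at this
  refine ⟨heq, ?_⟩
  -- continuity of gradient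
  have hgrad : Continuous (gradient φ) := by
    have h1 : Continuous (fderiv ℝ φ) := hφ.continuous_fderiv one_ne_zero
    exact (InnerProductSpace.toDual ℝ (EuclideanSpace ℝ (Fin n))).symm.continuous.comp h1
  -- shift index: use k i := j (i+1) - 1, so k i + 1 = j (i+1)
  have hjpos : ∀ i : ℕ, 1 ≤ j (i + 1) := fun i =>
    le_trans (Nat.succ_le_succ (Nat.zero_le i)) (hj.le_apply)
  have hidx : ∀ i : ℕ, j (i + 1) - 1 + 1 = j (i + 1) := fun i =>
    Nat.succ_pred_eq_of_pos (hjpos i)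
  set v : ℕ → EuclideanSpace ℝ (Fin n) := fun i => (hz (j (i + 1) - 1)).choose with hv
  have hvmem : ∀ i, v i ∈ subf (z (j (i + 1))) := by
    intro i
    rw [← hidx i]
    exact (hz (j (i + 1) - 1)).choose_spec.1
  have key : ∀ k, (hz k).choose
      = lam⁻¹ • (y (k + 1) - z (k + 1) - gradient φ (y (k + 1))) := by
    intro k
    have h2 := (hz k).choose_spec.2
    have h1 := hy k
    have hx : x k = gradient φ (y (k + 1)) + y (k + 1) := by
      have h : gradient φ (y (k + 1)) + y (k + 1) - x k = 0 := by
        rw [add_sub_assoc]; exact h1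
      exact (sub_eq_zero.mp h).symm
    rw [add_eq_zero_iff_eq_neg] at h2
    have hv' : lam • (hz k).choose = y (k + 1) - z (k + 1) - gradient φ (y (k + 1)) := by
      rw [h2, hx, two_smul]; abel
    have := congrArg (fun w => lam⁻¹ • w) hv'
    simpa [smul_smul, inv_mul_cancel₀ hlam.ne'] using this
  have hveq : ∀ i, v i = lam⁻¹ • (y (j (i + 1)) - z (j (i + 1)) - gradient φ (y (j (i + 1)))) := by
    intro i
    rw [show v i = _ from key (j (i + 1) - 1), hidx i]
  -- convergence of v
  have shift : Tendsto (fun i : ℕ => i + 1) atTop atTop := tendsto_add_atTop_nat 1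
  have hyc' : Tendsto (fun i => y (j (i + 1))) atTop (nhds ys) := hyc.comp shift
  have hzc' : Tendsto (fun i => z (j (i + 1))) atTop (nhds zs) := hzc.comp shift
  have hfc' : Tendsto (fun i => f (z (j (i + 1)))) atTop (nhds (f zs)) := hfc.comp shift
  have hgc : Tendsto (fun i => gradient φ (y (j (i + 1)))) atTop (nhds (gradient φ ys)) :=
    (hgrad.tendsto ys).comp hyc'
  have hvc : Tendsto v atTop (nhds (lam⁻¹ • (ys - zs - gradient φ ys))) := by
    have : Tendsto (fun i => lam⁻¹ • (y (j (i + 1)) - z (j (i + 1)) - gradient φ (y (j (i + 1)))))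
        atTop (nhds (lam⁻¹ • (ys - zs - gradient φ ys))) :=
      ((hyc'.sub hzc').sub hgc).const_smul _
    simpa only [← hveq] using this
  have hmem : lam⁻¹ • (ys - zs - gradient φ ys) ∈ subf zs :=
    hclosed zs _ (fun i => z (j (i + 1))) v hzc' hfc' hvc hvmem
  refine ⟨lam⁻¹ • (ys - zs - gradient φ ys), ?_, ?_⟩
  · rw [heq]; rwa [heq] at hmem
  · rw [heq, sub_self, zero_sub, smul_smul, mul_inv_cancel₀ hlam.ne', one_smul]
end
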